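/- Bandedness of the Hessian of the banded log-likelihood: let f_1,…,f_N : ℝ → (0,∞) be twice continuously differentiable state-dependent density functions and regard the banded log-likelihood ℓ̃_T as a function of the observation vector x = (x_1,…,x_T) ∈ ℝ^T by setting P_t = diag(f_1(x_t),…,f_N(x_t)). Then for any two time indices s and t whose block indices ⌈s/k⌉ and ⌈t/k⌉ differ by at least 2, the mixed second partial derivative ∂²ℓ̃_T/∂x_s∂x_t vanishes identically on ℝ^T. -/
import Mathlib


open Finset

/-- A probability (row) vector in `ℝ^N`. -/
def IsProbVec {N : ℕ} (v : Fin N → ℝ) : Prop :=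
  (∀ i, 0 ≤ v i) ∧ ∑ i, v i = 1

/-- A row-stochastic `N × N` real matrix. -/
def IsRowStochastic {N : ℕ} (A : Matrix (Fin N) (Fin N) ℝ) : Prop :=
  (∀ i j, 0 ≤ A i j) ∧ ∀ i, ∑ j, A i j = 1

/-- Normalize a vector to sum one (dividing by the sum of its entries). -/
noncomputable def probNormalize {N : ℕ} (v : Fin N → ℝ) : Fin N → ℝ :=
  fun j => v j / ∑ i, v i

/-- The unnormalized forward update `v ↦ v Γ P` with `P = diag(w)`. -/
def fwdVec {N : ℕ} (A : Matrix (Fin N) (Fin N) ℝ) (w : Fin N → ℝ) (v : Fin N → ℝ) :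
    Fin N → ℝ :=
  fun j => (∑ i, v i * A i j) * w j

/-- `fwdRun Γ w start v n` is the scaled forward variable at time `start + n`
obtained by initializing the scaled forward recursion with vector `v` at time
`start` (each step from time `τ - 1` to `τ` uses `Γ τ` and weights `w τ`). -/
noncomputable def fwdRun {N : ℕ} (Γ : ℕ → Matrix (Fin N) (Fin N) ℝ)
    (w : ℕ → Fin N → ℝ) (start : ℕ) (v : Fin N → ℝ) : ℕ → Fin N → ℝ
  | 0 => v
  | n + 1 =>
      probNormalize
        (fwdVec (Γ (start + n + 1)) (w (start + n + 1)) (fwdRun Γ w start v n))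

/-- The scaled forward variable `φ_t` (for `t = 1, …, T`):
`φ_1 = δ P_1 / (δ P_1 1ᵀ)` and `φ_t = φ_{t-1} Γ^(t) P_t / (φ_{t-1} Γ^(t) P_t 1ᵀ)`. -/
noncomputable def phi {N : ℕ} (δ : Fin N → ℝ) (Γ : ℕ → Matrix (Fin N) (Fin N) ℝ)
    (w : ℕ → Fin N → ℝ) (t : ℕ) : Fin N → ℝ :=
  fwdRun Γ w 1 (probNormalize (fun j => δ j * w 1 j)) (t - 1)

/-- The normalizing constant `v Γ^(t) P_t 1ᵀ`. -/
def contrib {N : ℕ} (Γ : ℕ → Matrix (Fin N) (Fin N) ℝ) (w : ℕ → Fin N → ℝ)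
    (v : Fin N → ℝ) (t : ℕ) : ℝ :=
  ∑ j, (∑ i, v i * Γ t i j) * w t j

/-- The exact HMM log-likelihood
`ℓ_T = log (δ P_1 1ᵀ) + ∑_{t=2}^T log (φ_{t-1} Γ^(t) P_t 1ᵀ)`. -/
noncomputable def loglik {N : ℕ} (δ : Fin N → ℝ) (Γ : ℕ → Matrix (Fin N) (Fin N) ℝ)
    (w : ℕ → Fin N → ℝ) (T : ℕ) : ℝ :=
  Real.log (∑ j, δ j * w 1 j)
    + ∑ t ∈ Finset.Icc 2 T, Real.log (contrib Γ w (phi δ Γ w (t - 1)) t)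

/-- The banded (bandwidth-`k`) HMM log-likelihood: the first two blocks are exact,
and for blocks `b ≥ 3` the forward recursion is re-initialized with the fixed
probability vector `ρ` at time `t_{b-1} = (b-2)k`. -/
noncomputable def bandedLoglik {N : ℕ} (δ ρ : Fin N → ℝ)
    (Γ : ℕ → Matrix (Fin N) (Fin N) ℝ) (w : ℕ → Fin N → ℝ) (k B : ℕ) : ℝ :=
  Real.log (∑ j, δ j * w 1 j)
    + ∑ t ∈ Finset.Icc 2 (2 * k), Real.log (contrib Γ w (phi δ Γ w (t - 1)) t)
    + ∑ b ∈ Finset.Icc 3 B, ∑ t ∈ Finset.Icc ((b - 1) * k + 1) (b * k),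
        Real.log (contrib Γ w (fwdRun Γ w ((b - 2) * k) ρ (t - 1 - (b - 2) * k)) t)

/-- The product `Γ^(t) Γ^(t+1) ⋯ Γ^(t+l-1)` of `l` consecutive transition matrices. -/
noncomputable def matProd {N : ℕ} (Γ : ℕ → Matrix (Fin N) (Fin N) ℝ) (t l : ℕ) :
    Matrix (Fin N) (Fin N) ℝ :=
  ((List.range l).map fun s => Γ (t + s)).prod

/- ===== auxiliary lemmas ===== -/

/-- `fwdRun` only depends on the weights at times `start+1, …, start+n`. -/
lemma fwdRun_congr {N : ℕ} (Γ : ℕ → Matrix (Fin N) (Fin N) ℝ)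
    (w w' : ℕ → Fin N → ℝ) (start : ℕ) (v : Fin N → ℝ) (n : ℕ)
    (h : ∀ m, start + 1 ≤ m → m ≤ start + n → w m = w' m) :
    fwdRun Γ w start v n = fwdRun Γ w' start v n := by
  induction n with
  | zero => rfl
  | succ n ih =>
    simp only [fwdRun]
    rw [ih (fun m hm1 hm2 => h m hm1 (by omega)),
        h (start + n + 1) (by omega) (by omega)]

lemma contrib_congr {N : ℕ} (Γ : ℕ → Matrix (Fin N) (Fin N) ℝ)
    (w w' : ℕ → Fin N → ℝ) (v : Fin N → ℝ) (t : ℕ) (h : w t = w' t) :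
    contrib Γ w v t = contrib Γ w' v t := by
  unfold contrib; rw [h]

lemma phi_congr {N : ℕ} (δ : Fin N → ℝ) (Γ : ℕ → Matrix (Fin N) (Fin N) ℝ)
    (w w' : ℕ → Fin N → ℝ) (m : ℕ) (hm : 1 ≤ m)
    (h : ∀ τ, 1 ≤ τ → τ ≤ m → w τ = w' τ) :
    phi δ Γ w m = phi δ Γ w' m := by
  unfold phi
  rw [h 1 le_rfl hm]
  exact fwdRun_congr Γ w w' 1 _ (m - 1) (fun τ h1 h2 => h τ (by omega) (by omega))

/-- The "head" (first two blocks) of the banded log-likelihood. -/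
noncomputable def headLL {N : ℕ} (δ : Fin N → ℝ) (Γ : ℕ → Matrix (Fin N) (Fin N) ℝ)
    (w : ℕ → Fin N → ℝ) (k : ℕ) : ℝ :=
  Real.log (∑ j, δ j * w 1 j)
    + ∑ t ∈ Finset.Icc 2 (2 * k), Real.log (contrib Γ w (phi δ Γ w (t - 1)) t)

/-- The block-`b` part of the banded log-likelihood, with `K = (b-2)k`. -/
noncomputable def blockLL {N : ℕ} (Γ : ℕ → Matrix (Fin N) (Fin N) ℝ)
    (ρ : Fin N → ℝ) (w : ℕ → Fin N → ℝ) (K k : ℕ) : ℝ :=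
  ∑ τ ∈ Finset.Icc (K + k + 1) (K + 2 * k),
    Real.log (contrib Γ w (fwdRun Γ w K ρ (τ - 1 - K)) τ)

lemma bandedLoglik_decomp {N : ℕ} (δ ρ : Fin N → ℝ)
    (Γ : ℕ → Matrix (Fin N) (Fin N) ℝ) (w : ℕ → Fin N → ℝ) (k B : ℕ) :
    bandedLoglik δ ρ Γ w k B
      = headLL δ Γ w k + ∑ b ∈ Finset.Icc 3 B, blockLL Γ ρ w ((b - 2) * k) k := by
  unfold bandedLoglik headLL blockLL
  congr 1
  refine Finset.sum_congr rfl fun b hb => ?_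
  rw [Finset.mem_Icc] at hb
  have hb1 : b - 1 = b - 2 + 1 := by omega
  have hb2 : b = b - 2 + 2 := by omega
  have e1 : (b - 1) * k = (b - 2) * k + k := by rw [hb1, add_mul, one_mul]
  have e2 : b * k = (b - 2) * k + 2 * k := by
    conv_lhs => rw [hb2]
    rw [add_mul]
  rw [e1, e2]

lemma headLL_congr {N : ℕ} (δ : Fin N → ℝ) (Γ : ℕ → Matrix (Fin N) (Fin N) ℝ)
    (w w' : ℕ → Fin N → ℝ) (k : ℕ) (hk : 1 ≤ k)
    (h : ∀ τ, 1 ≤ τ → τ ≤ 2 * k → w τ = w' τ) :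
    headLL δ Γ w k = headLL δ Γ w' k := by
  unfold headLL
  rw [h 1 le_rfl (by omega)]
  congr 1
  refine Finset.sum_congr rfl fun τ hτ => ?_
  rw [Finset.mem_Icc] at hτ
  rw [phi_congr δ Γ w w' (τ - 1) (by omega) (fun m hm1 hm2 => h m hm1 (by omega)),
      contrib_congr Γ w w' _ τ (h τ (by omega) hτ.2)]

lemma blockLL_congr {N : ℕ} (Γ : ℕ → Matrix (Fin N) (Fin N) ℝ)
    (ρ : Fin N → ℝ) (w w' : ℕ → Fin N → ℝ) (K k : ℕ)
    (h : ∀ m, K + 1 ≤ m → m ≤ K + 2 * k → w m = w' m) :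
    blockLL Γ ρ w K k = blockLL Γ ρ w' K k := by
  unfold blockLL
  refine Finset.sum_congr rfl fun τ hτ => ?_
  rw [Finset.mem_Icc] at hτ
  rw [fwdRun_congr Γ w w' K ρ (τ - 1 - K) (fun m hm1 hm2 => h m hm1 (by omega)),
      contrib_congr Γ w w' _ τ (h τ (by omega) hτ.2)]

/-- Ceiling-block bounds: times in `(ck, ck+2k]` lie in blocks `c+1` or `c+2`. -/
lemma blockle (k c m : ℕ) (hk : 0 < k) (h1 : c * k + 1 ≤ m) (h2 : m ≤ c * k + 2 * k) :
    c + 1 ≤ (m + k - 1) / k ∧ (m + k - 1) / k ≤ c + 2 := by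
  have hlow : (c + 1) * k ≤ m + k - 1 := by
    have e : (c + 1) * k = c * k + k := by ring
    rw [e]
    revert h1 h2
    generalize c * k = K
    intro h1 h2
    omega
  have hhigh : m + k - 1 < (c + 3) * k := by
    have e : (c + 3) * k = c * k + 3 * k := by ring
    rw [e]
    revert h1 h2
    generalize c * k = K
    intro h1 h2
    omega
  refine ⟨(Nat.le_div_iff_mul_le hk).mpr hlow, ?_⟩
  have h3 : (m + k - 1) / k < c + 3 := (Nat.div_lt_iff_lt_mul hk).mpr hhigh
  omega

/-- Four-point identity for the banded log-likelihood when no summand can depend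
on both `x_s` and `x_t`. -/
lemma bandedLoglik_four_point {N : ℕ} (δ ρ : Fin N → ℝ)
    (Γ : ℕ → Matrix (Fin N) (Fin N) ℝ) (k B : ℕ) (hk : 1 ≤ k)
    (s t : ℕ) (hs1 : 1 ≤ s) (ht1 : 1 ≤ t)
    (W : ℝ → ℝ → ℕ → Fin N → ℝ) (u v : ℝ)
    (hWt : ∀ a b b' τ, τ ≠ t → W a b τ = W a b' τ)
    (hWs : ∀ a a' b τ, τ ≠ s → W a b τ = W a' b τ)
    (hnb : ∀ c : ℕ, ¬ (c * k + 1 ≤ s ∧ s ≤ c * k + 2 * k ∧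
                       c * k + 1 ≤ t ∧ t ≤ c * k + 2 * k))
    (a b : ℝ) :
    bandedLoglik δ ρ Γ (W a b) k B + bandedLoglik δ ρ Γ (W u v) k B
      = bandedLoglik δ ρ Γ (W a v) k B + bandedLoglik δ ρ Γ (W u b) k B := by
  rw [bandedLoglik_decomp, bandedLoglik_decomp, bandedLoglik_decomp, bandedLoglik_decomp]
  have Hfp : headLL δ Γ (W a b) k + headLL δ Γ (W u v) k
      = headLL δ Γ (W a v) k + headLL δ Γ (W u b) k := by
    have hor : 2 * k < s ∨ 2 * k < t := by
      by_cases h2 : s ≤ 2 * k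
      · by_cases h3 : t ≤ 2 * k
        · exact absurd ⟨by omega, by omega, by omega, by omega⟩ (hnb 0)
        · right; omega
      · left; omega
    rcases hor with hor | hor
    · have e1 : headLL δ Γ (W a b) k = headLL δ Γ (W u b) k :=
        headLL_congr δ Γ _ _ k hk (fun τ h1 h2 => hWs a u b τ (by omega))
      have e2 : headLL δ Γ (W a v) k = headLL δ Γ (W u v) k :=
        headLL_congr δ Γ _ _ k hk (fun τ h1 h2 => hWs a u v τ (by omega))
      linarith
    · have e1 : headLL δ Γ (W a b) k = headLL δ Γ (W a v) k :=
        headLL_congr δ Γ _ _ k hk (fun τ h1 h2 => hWt a b v τ (by omega))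
      have e2 : headLL δ Γ (W u b) k = headLL δ Γ (W u v) k :=
        headLL_congr δ Γ _ _ k hk (fun τ h1 h2 => hWt u b v τ (by omega))
      linarith
  have Sfp : (∑ b' ∈ Finset.Icc 3 B, blockLL Γ ρ (W a b) ((b' - 2) * k) k)
        + ∑ b' ∈ Finset.Icc 3 B, blockLL Γ ρ (W u v) ((b' - 2) * k) k
      = (∑ b' ∈ Finset.Icc 3 B, blockLL Γ ρ (W a v) ((b' - 2) * k) k)
        + ∑ b' ∈ Finset.Icc 3 B, blockLL Γ ρ (W u b) ((b' - 2) * k) k := by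
    rw [← Finset.sum_add_distrib, ← Finset.sum_add_distrib]
    refine Finset.sum_congr rfl fun b' hb' => ?_
    have hnbK := hnb (b' - 2)
    revert hnbK
    generalize (b' - 2) * k = K
    intro hnbK
    have hcase : (∀ m, K + 1 ≤ m → m ≤ K + 2 * k → m ≠ s)
        ∨ (∀ m, K + 1 ≤ m → m ≤ K + 2 * k → m ≠ t) := by
      by_cases hA : K + 1 ≤ s ∧ s ≤ K + 2 * k
      · right; intro m h1 h2 he
        exact hnbK ⟨hA.1, hA.2, by omega, by omega⟩
      · left; intro m h1 h2 he
        exact hA (he ▸ ⟨h1, h2⟩)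
    rcases hcase with hc | hc
    · have g1 : blockLL Γ ρ (W a b) K k = blockLL Γ ρ (W u b) K k :=
        blockLL_congr Γ ρ _ _ K k (fun m h1 h2 => hWs a u b m (hc m h1 h2))
      have g2 : blockLL Γ ρ (W a v) K k = blockLL Γ ρ (W u v) K k :=
        blockLL_congr Γ ρ _ _ K k (fun m h1 h2 => hWs a u v m (hc m h1 h2))
      rw [g1, g2, add_comm]
    · have g1 : blockLL Γ ρ (W a b) K k = blockLL Γ ρ (W a v) K k :=
        blockLL_congr Γ ρ _ _ K k (fun m h1 h2 => hWt a b v m (hc m h1 h2))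
      have g2 : blockLL Γ ρ (W u b) K k = blockLL Γ ρ (W u v) K k :=
        blockLL_congr Γ ρ _ _ K k (fun m h1 h2 => hWt u b v m (hc m h1 h2))
      rw [g1, g2]
  linarith

/-- If `L(a,b) + L(u,v) = L(a,v) + L(u,b)` identically, the mixed second partial
derivative of `L` at `(u,v)` vanishes. -/
lemma mixed_deriv_zero (L : ℝ → ℝ → ℝ) (u v : ℝ)
    (key : ∀ a b, L a b + L u v = L a v + L u b) :
    deriv (fun a => deriv (fun b => L a b) v) u = 0 := by
  have h1 : ∀ a, deriv (fun b => L a b) v = deriv (fun b => L u b - L u v) v := by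
    intro a
    have he : (fun b => L a b) = fun b => L a v + (L u b - L u v) := by
      funext b
      have := key a b
      linarith
    rw [he, deriv_const_add]
  rw [show (fun a => deriv (fun b => L a b) v)
      = (fun _ : ℝ => deriv (fun b => L u b - L u v) v) from funext h1]
  exact deriv_const u _


/-- Bandedness of the Hessian of the banded log-likelihood: with
strictly positive, twice continuously differentiable state-dependent density
functions `f_1, …, f_N : ℝ → (0,∞)` and `P_t = diag(f_1(x_t), …, f_N(x_t))`, for
any two time indices `s`, `t` whose block indices `⌈s/k⌉ = (s+k-1)/k` and
`⌈t/k⌉ = (t+k-1)/k` differ by at least `2`, the mixed second partial derivative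
`∂²ℓ̃_T/∂x_s∂x_t` vanishes identically on `ℝ^T`. -/
theorem banded_loglik_hessian_banded
    (N T B k : ℕ) (hN : 1 ≤ N) (hk : 1 ≤ k) (hB : 3 ≤ B) (hT : T = B * k)
    (δ ρ : Fin N → ℝ) (hδ : IsProbVec δ) (hρ : IsProbVec ρ)
    (Γ : ℕ → Matrix (Fin N) (Fin N) ℝ)
    (hΓ : ∀ τ, 2 ≤ τ → τ ≤ T → IsRowStochastic (Γ τ))
    (f : Fin N → ℝ → ℝ)
    (hf : ∀ j, ContDiff ℝ 2 (f j)) (hfpos : ∀ j x, 0 < f j x)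
    (s t : ℕ) (hs1 : 1 ≤ s) (hsT : s ≤ T) (ht1 : 1 ≤ t) (htT : t ≤ T)
    (hblock : (s + k - 1) / k + 2 ≤ (t + k - 1) / k ∨
              (t + k - 1) / k + 2 ≤ (s + k - 1) / k) :
    ∀ (x : ℕ → ℝ) (u v : ℝ),
      deriv (fun u' : ℝ =>
        deriv (fun v' : ℝ =>
          bandedLoglik δ ρ Γ
            (fun τ j => f j (Function.update (Function.update x s u') t v' τ)) k B) v) u
        = 0 := by
  intro x u v
  have hk0 : 0 < k := hk
  have hnb : ∀ c : ℕ, ¬ (c * k + 1 ≤ s ∧ s ≤ c * k + 2 * k ∧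
      c * k + 1 ≤ t ∧ t ≤ c * k + 2 * k) := by
    intro c hc
    obtain ⟨h1, h2, h3, h4⟩ := hc
    have hs' := blockle k c s hk0 h1 h2
    have ht' := blockle k c t hk0 h3 h4
    rcases hblock with h | h <;>
      · revert h hs' ht'
        generalize (s + k - 1) / k = bs
        generalize (t + k - 1) / k = bt
        intro h hs' ht'
        omega
  refine mixed_deriv_zero
    (fun a b => bandedLoglik δ ρ Γ
      (fun τ j => f j (Function.update (Function.update x s a) t b τ)) k B) u v ?_
  intro a b
  exact bandedLoglik_four_point δ ρ Γ k B hk s t hs1 ht1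
    (fun a b τ j => f j (Function.update (Function.update x s a) t b τ)) u v
    (fun a b b' τ hτ => by funext j; simp [Function.update_apply, hτ])
    (fun a a' b τ hτ => by funext j; simp [Function.update_apply, hτ])
    hnb a b
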